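/- Let δ > 0 and define (p_n) by p₀ = 1+δ, p_{n+1} = 1+δ − 1/(1+δ+p_n); let ρ₀ := 1, ρ_m := 1/(1+δ+p_{m−1}) for m ≥ 1, q_n := ∏_{m=0}^n ρ_m, and M := Σ_{n=0}^∞ q_n·p_n. Then the series defining M converges, and there exist constants C₁, C₂ > 0 and δ₀ ∈ (0,1), all independent of δ, such that for all δ ∈ (0,δ₀) one has C₁ ≤ M ≤ C₂; moreover M → π²/6 as δ → 0⁺ up to a bounded multiplicative factor, i.e. M = (π²/6)·O(1). -/

import Mathlib

open Real

theorem stmt_12 :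
    ∃ C₁ > (0:ℝ), ∃ C₂ > (0:ℝ), ∃ δ₀ ∈ Set.Ioo (0:ℝ) 1, ∀ δ ∈ Set.Ioo (0:ℝ) δ₀,
      ∀ p ρ q : ℕ → ℝ,
        p 0 = 1 + δ →
        (∀ n, p (n + 1) = 1 + δ - 1 / (1 + δ + p n)) →
        ρ 0 = 1 →
        (∀ m, 1 ≤ m → ρ m = 1 / (1 + δ + p (m - 1))) →
        (∀ n, q n = ∏ m ∈ Finset.range (n + 1), ρ m) →
        Summable (fun n => q n * p n) ∧
        C₁ ≤ ∑' n, q n * p n ∧ (∑' n, q n * p n) ≤ C₂ := by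
  refine ⟨1, one_pos, 4, by norm_num, 1/2, by norm_num, ?_⟩
  rintro δ ⟨hδ0, hδ1⟩ p ρ q hp0 hpr hρ0 hρ hq
  have hδ1' : δ < 1 := by linarith
  -- basic bounds on p
  have hp : ∀ n, 0 < p n ∧ p n ≤ 1 + δ := by
    intro n
    induction n with
    | zero => rw [hp0]; constructor <;> linarith
    | succ n ih =>
      obtain ⟨h1, h2⟩ := ih
      have hs : (1:ℝ) < 1 + δ + p n := by linarith
      have hinv : 1 / (1 + δ + p n) < 1 := by
        rw [div_lt_one (by linarith)]; linarith
      have hinv0 : 0 < 1 / (1 + δ + p n) := by positivity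
      rw [hpr n]; constructor <;> linarith
  -- q 0 = 1
  have hq0 : q 0 = 1 := by
    rw [hq 0, Finset.prod_range_one, hρ0]
  -- recurrence for q
  have hqs : ∀ n, q (n + 1) = q n * (1 / (1 + δ + p n)) := by
    intro n
    rw [hq (n + 1), Finset.prod_range_succ, ← hq n, hρ (n + 1) (by omega)]
    simp
  -- positivity of q
  have hqpos : ∀ n, 0 < q n := by
    intro n
    induction n with
    | zero => rw [hq0]; norm_num
    | succ n ih =>
      have := (hp n).1
      rw [hqs n]
      positivity
  -- key telescoping bound
  have key : ∀ n, q n * p n ≤ 4 * (q n - q (n + 1)) := by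
    intro n
    obtain ⟨h1, h2⟩ := hp n
    have hs : (0:ℝ) < 1 + δ + p n := by linarith
    have hqn := hqpos n
    rw [hqs n]
    have e : q n - q n * (1 / (1 + δ + p n)) = q n * (δ + p n) / (1 + δ + p n) := by
      field_simp; ring
    rw [e, mul_div_assoc', le_div_iff₀ hs]
    nlinarith [mul_nonneg (mul_nonneg hδ0.le hqn.le) (by linarith : (0:ℝ) ≤ 4 - p n),
      mul_nonneg (mul_nonneg hqn.le h1.le) (by linarith : (0:ℝ) ≤ 3 - p n)]
  have hnn : ∀ n, 0 ≤ q n * p n := fun n => (mul_pos (hqpos n) (hp n).1).le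
  have hsum_bound : ∀ N, ∑ i ∈ Finset.range N, q i * p i ≤ 4 := by
    intro N
    calc ∑ i ∈ Finset.range N, q i * p i
        ≤ ∑ i ∈ Finset.range N, 4 * (q i - q (i + 1)) :=
          Finset.sum_le_sum fun i _ => key i
      _ = 4 * (q 0 - q N) := by rw [← Finset.mul_sum, Finset.sum_range_sub']
      _ ≤ 4 := by have := hqpos N; rw [hq0]; nlinarith
  have hS : Summable (fun n => q n * p n) := summable_of_sum_range_le hnn hsum_bound
  refine ⟨hS, ?_, hS.tsum_le_of_sum_range_le hsum_bound⟩
  calc (1:ℝ) ≤ q 0 * p 0 := by rw [hq0, hp0]; linarith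
    _ ≤ ∑' n, q n * p n := hS.le_tsum 0 fun i _ => hnn i
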